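/- (The Gaussian radial basis function kernel is transparent.) Let γ > 0 and d ≥ 1, and define κ(s,t) = exp(−γ‖s − t‖²) on ℝ^d × ℝ^d (Euclidean norm). Then (i) for each t, the map s ↦ κ(s,t) is twice continuously differentiable and its derivative at s = t is the zero linear map, and (ii) there exists a constant C (depending only on γ and d) such that ‖D²_s κ(s,t)‖ ≤ C for all s, t ∈ ℝ^d. -/

import Mathlib

section aux

variable {E : Type*} [NormedAddCommGroup E] [InnerProductSpace ℝ E]

/-- The real inner product as a plain (ℝ-linear) continuous linear map. -/
noncomputable def realInnerCLM (E : Type*) [NormedAddCommGroup E] [InnerProductSpace ℝ E] :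
    E →L[ℝ] E →L[ℝ] ℝ := innerSL ℝ

lemma realInnerCLM_apply (x : E) : realInnerCLM E x = innerSL ℝ x := rfl

lemma norm_realInnerCLM_le : ‖realInnerCLM E‖ ≤ 1 := norm_innerSL_le ℝ

lemma gauss_hasFDerivAt (γ : ℝ) (t s : E) :
    HasFDerivAt (fun s : E => Real.exp (-γ * ‖s - t‖ ^ 2))
      ((-(2 * γ) * Real.exp (-γ * ‖s - t‖ ^ 2)) • innerSL ℝ (s - t)) s := by
  have h1 : HasFDerivAt (fun s : E => ‖s - t‖ ^ 2)
      (2 • (innerSL ℝ (s - t)).comp (ContinuousLinearMap.id ℝ E)) s := by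
    simpa using ((hasFDerivAt_id s).sub_const t).norm_sq
  have h2 := (h1.const_mul (-γ)).exp
  convert h2 using 1
  ext y
  simp [mul_comm, mul_assoc, mul_left_comm]

lemma gauss_fderiv (γ : ℝ) (t s : E) :
    fderiv ℝ (fun s : E => Real.exp (-γ * ‖s - t‖ ^ 2)) s
      = (-(2 * γ) * Real.exp (-γ * ‖s - t‖ ^ 2)) • innerSL ℝ (s - t) :=
  (gauss_hasFDerivAt γ t s).fderiv

lemma gauss_snd_hasFDerivAt (γ : ℝ) (t s : E) :
    HasFDerivAt (fderiv ℝ (fun s : E => Real.exp (-γ * ‖s - t‖ ^ 2)))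
      ((-(2 * γ) * Real.exp (-γ * ‖s - t‖ ^ 2)) • realInnerCLM E
        + ((-(2 * γ)) • ((-(2 * γ) * Real.exp (-γ * ‖s - t‖ ^ 2)) • innerSL ℝ (s - t))).smulRight
            (innerSL ℝ (s - t))) s := by
  have hL : HasFDerivAt (fun s : E => innerSL ℝ (s - t)) (realInnerCLM E) s :=
    (realInnerCLM E).hasFDerivAt.comp s ((hasFDerivAt_id s).sub_const t)
  have ha : HasFDerivAt (fun s : E => -(2 * γ) * Real.exp (-γ * ‖s - t‖ ^ 2))
      ((-(2 * γ)) • ((-(2 * γ) * Real.exp (-γ * ‖s - t‖ ^ 2)) • innerSL ℝ (s - t))) s :=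
    (gauss_hasFDerivAt γ t s).const_mul _
  have h := ha.smul hL
  refine HasFDerivAt.congr_of_eventuallyEq h ?_
  filter_upwards with y
  rw [gauss_fderiv]
  rfl

end aux

set_option synthInstance.maxHeartbeats 1000000 in
set_option maxHeartbeats 1000000 in
/-- The Gaussian radial basis function kernel `κ(s,t) = exp(−γ‖s − t‖²)` is transparent:
each slice is twice continuously differentiable with vanishing derivative at `s = t`,
and the second derivative is uniformly bounded. -/
theorem gaussian_kernel_transparent
    {d : ℕ} (hd : 1 ≤ d) (γ : ℝ) (hγ : 0 < γ) :
    (∀ t : EuclideanSpace ℝ (Fin d),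
        ContDiff ℝ 2 (fun s : EuclideanSpace ℝ (Fin d) => Real.exp (-γ * ‖s - t‖ ^ 2)) ∧
        fderiv ℝ (fun s : EuclideanSpace ℝ (Fin d) => Real.exp (-γ * ‖s - t‖ ^ 2)) t = 0) ∧
    ∃ C : ℝ, ∀ s t : EuclideanSpace ℝ (Fin d),
      ‖iteratedFDeriv ℝ 2
          (fun s' : EuclideanSpace ℝ (Fin d) => Real.exp (-γ * ‖s' - t‖ ^ 2)) s‖ ≤ C := by
  constructor
  · intro t
    constructor
    · exact Real.contDiff_exp.comp
        (contDiff_const.mul ((contDiff_norm_sq ℝ).comp (contDiff_id.sub contDiff_const)))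
    · rw [gauss_fderiv]
      simp
  · refine ⟨6 * γ, fun s t => ?_⟩
    set F := fun s' : EuclideanSpace ℝ (Fin d) => Real.exp (-γ * ‖s' - t‖ ^ 2) with hF
    have key : ‖iteratedFDeriv ℝ 2 F s‖ = ‖fderiv ℝ (fderiv ℝ F) s‖ := by
      rw [← norm_iteratedFDeriv_fderiv, ← norm_iteratedFDeriv_fderiv,
        norm_iteratedFDeriv_zero]
    rw [key, (gauss_snd_hasFDerivAt γ t s).fderiv]
    refine (norm_add_le (E := EuclideanSpace ℝ (Fin d) →L[ℝ] EuclideanSpace ℝ (Fin d) →L[ℝ] ℝ) _ _).trans ?_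
    set r := ‖s - t‖ with hr
    set c := Real.exp (-γ * r ^ 2) with hc
    have hr0 : 0 ≤ r := norm_nonneg _
    have hc0 : 0 < c := Real.exp_pos _
    have habs : |(-(2 * γ))| = 2 * γ := by
      rw [abs_neg, abs_of_nonneg (by positivity)]
    have habs2 : |(-(2 * γ) * c)| = 2 * γ * c := by
      rw [abs_mul, habs, abs_of_pos hc0]
    have hb1 : ‖(-(2 * γ) * c) • realInnerCLM (EuclideanSpace ℝ (Fin d))‖ ≤ 2 * γ * c := by
      have e := @norm_smul ℝ _ _ _ _ NormedSpace.toNormSMulClass (-(2 * γ) * c)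
        (realInnerCLM (EuclideanSpace ℝ (Fin d)))
      rw [e, Real.norm_eq_abs, habs2]
      have h1 := norm_realInnerCLM_le (E := EuclideanSpace ℝ (Fin d))
      have h2 : 2 * γ * c * ‖realInnerCLM (EuclideanSpace ℝ (Fin d))‖ ≤ 2 * γ * c * 1 :=
        mul_le_mul_of_nonneg_left h1 (by positivity)
      linarith
    have hb2 : ‖((-(2 * γ)) • ((-(2 * γ) * c) • innerSL ℝ (s - t))).smulRight
        (innerSL ℝ (s - t))‖ ≤ 4 * γ ^ 2 * c * r ^ 2 := by
      rw [ContinuousLinearMap.norm_smulRight_apply, norm_smul, norm_smul,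
        innerSL_apply_norm, Real.norm_eq_abs, Real.norm_eq_abs,
        habs, habs2, ← hr]
      exact le_of_eq (by ring)
    have hcle : c ≤ 1 := Real.exp_le_one_iff.mpr (by nlinarith)
    have hxc : γ * r ^ 2 * c ≤ 1 := by
      have h := Real.add_one_le_exp (γ * r ^ 2)
      have hcc : c = (Real.exp (γ * r ^ 2))⁻¹ := by
        rw [hc, ← Real.exp_neg]; ring_nf
      have hep : 0 < Real.exp (γ * r ^ 2) := Real.exp_pos _
      rw [hcc, ← div_eq_mul_inv, div_le_one hep]
      linarith
    nlinarith [hb1, hb2]
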